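/- Fix a positive integer d and v ∈ I(d). Let C be a v-chain and k a positive integer. If odepth_C(α) ≤ k for every element α of C, then the depth in 𝔖_C of every element of 𝔖_C is at most the smallest even integer not smaller than k. -/

import Mathlib

namespace OG

/-- `star d k = k* = 2d+1-k`. -/
def star (d k : ℕ) : ℕ := 2 * d + 1 - k

/-- `I(d,2d)`: the set of `d`-element subsets of `{1,…,2d}`. -/
def Idn (d : ℕ) : Set (Finset ℕ) :=
  {v | v.card = d ∧ ∀ k ∈ v, 1 ≤ k ∧ k ≤ 2 * d}

/-- The partial order on `I(d,2d)`: entrywise comparison of increasing enumerations. -/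
def leI (x y : Finset ℕ) : Prop :=
  List.Forall₂ (· ≤ ·) (x.sort (· ≤ ·)) (y.sort (· ≤ ·))

/-- `I(d)`: elements of `I(d,2d)` containing exactly one of `k`, `k*` for each `k`,
with evenly many entries exceeding `d`. -/
def Iset (d : ℕ) : Set (Finset ℕ) :=
  {v | v ∈ Idn d ∧ (∀ k, 1 ≤ k → k ≤ 2 * d → (k ∈ v ↔ star d k ∉ v)) ∧
       Even ((v.filter (fun k => d < k)).card)}

/-- membership in `N(v)`. -/
def inN (d : ℕ) (v : Finset ℕ) (p : ℕ × ℕ) : Prop :=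
  1 ≤ p.1 ∧ p.1 ≤ 2 * d ∧ 1 ≤ p.2 ∧ p.2 ≤ 2 * d ∧ p.1 ∉ v ∧ p.2 ∈ v ∧ p.2 < p.1

/-- membership in `OR(v)`. -/
def inOR (d : ℕ) (v : Finset ℕ) (p : ℕ × ℕ) : Prop :=
  1 ≤ p.1 ∧ p.1 ≤ 2 * d ∧ 1 ≤ p.2 ∧ p.2 ≤ 2 * d ∧ p.1 ∉ v ∧ p.2 ∈ v ∧ p.1 < star d p.2

/-- membership in `ON(v) = OR(v) ∩ N(v)`. -/
def inON (d : ℕ) (v : Finset ℕ) (p : ℕ × ℕ) : Prop := inN d v p ∧ inOR d v p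

/-- membership in the diagonal `D(v)`. -/
def inDiag (d : ℕ) (v : Finset ℕ) (p : ℕ × ℕ) : Prop :=
  p.1 ∉ v ∧ p.2 ∈ v ∧ p.1 = star d p.2

instance (d : ℕ) (v : Finset ℕ) : DecidablePred (inN d v) := fun p => by
  unfold inN; infer_instance

instance (d : ℕ) (v : Finset ℕ) : DecidablePred (inOR d v) := fun p => by
  unfold inOR; infer_instance

instance (d : ℕ) (v : Finset ℕ) : DecidablePred (inON d v) := fun p => by
  unfold inON; infer_instance

instance (d : ℕ) (v : Finset ℕ) : DecidablePred (inDiag d v) := fun p => by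
  unfold inDiag; infer_instance

/-- `(R,C) > (r,c)` iff `R > r` and `C < c`. -/
def pgt (A B : ℕ × ℕ) : Prop := B.1 < A.1 ∧ A.2 < B.2

instance : DecidableRel pgt := fun A B => by unfold pgt; infer_instance

/-- `(R,C)` dominates `(r,c)` iff `R ≥ r` and `C ≤ c`. -/
def pdom (A B : ℕ × ℕ) : Prop := B.1 ≤ A.1 ∧ A.2 ≤ B.2

/-- vertical projection `p_v(r,c) = (c*,c)`. -/
def pv (d : ℕ) (α : ℕ × ℕ) : ℕ × ℕ := (star d α.2, α.2)

/-- horizontal projection `p_h(r,c) = (r,r*)`. -/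
def ph (d : ℕ) (α : ℕ × ℕ) : ℕ × ℕ := (α.1, star d α.1)

/-- `(r,c)^# = (c*,r*)`. -/
def hash (d : ℕ) (α : ℕ × ℕ) : ℕ × ℕ := (star d α.2, star d α.1)

/-- A `v`-chain: a strictly decreasing (under `pgt`) list of elements of `ON(v)`. -/
def IsVChain (d : ℕ) (v : Finset ℕ) (C : List (ℕ × ℕ)) : Prop :=
  C.Chain' pgt ∧ ∀ α ∈ C, inON d v α

/-- Two consecutive elements `(r,c) > (R,C)` of a `v`-chain are connected
if `r* ≥ C` and `R > r*`. -/
def Connected (d : ℕ) (α β : ℕ × ℕ) : Prop :=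
  β.2 ≤ star d α.1 ∧ star d α.1 < β.1

instance (d : ℕ) : ∀ α β, Decidable (Connected d α β) := fun α β => by
  unfold Connected; infer_instance

/-- The connected components of a `v`-chain. -/
def components (d : ℕ) (C : List (ℕ × ℕ)) : List (List (ℕ × ℕ)) :=
  C.splitBy (fun a b => decide (Connected d a b))

/-- The three possible types of an element of a `v`-chain. -/
inductive VType | V | H | S
deriving DecidableEq

/-- The type of an element `α` of a `v`-chain `C`: type V if `α` is not the last element
of its connected component or that component has even cardinality; otherwise type H if
`p_h(α) ∈ N(v)` (i.e. `r > r*`) and type S if not. -/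
def typeOf (d : ℕ) (C : List (ℕ × ℕ)) (α : ℕ × ℕ) : VType :=
  match (components d C).find? (fun g => decide (α ∈ g)) with
  | some g =>
      if g.getLast? = some α ∧ Odd g.length then
        (if star d α.1 < α.1 then VType.H else VType.S)
      else VType.V
  | none => VType.V

/-- `𝔖_{C,α}`. -/
def SCa (d : ℕ) (C : List (ℕ × ℕ)) (α : ℕ × ℕ) : Multiset (ℕ × ℕ) :=
  match typeOf d C α with
  | VType.V => {pv d α}
  | VType.H => {pv d α, ph d α}
  | VType.S => {α, hash d α}

/-- `𝔖_C`: the multiset union of the `𝔖_{C,α}` over `α ∈ C`. -/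
def SC (d : ℕ) (C : List (ℕ × ℕ)) : Multiset (ℕ × ℕ) :=
  (C.map (fun α => SCa d C α)).sum

/-- `q_{C,α}`. -/
def qCa (d : ℕ) (C : List (ℕ × ℕ)) (α : ℕ × ℕ) : ℕ × ℕ :=
  match typeOf d C α with
  | VType.S => α
  | _ => pv d α

/-- A strictly decreasing chain of elements of the monomial `S`. -/
def IsChainIn (S : Multiset (ℕ × ℕ)) (L : List (ℕ × ℕ)) : Prop :=
  L.Chain' pgt ∧ ∀ β ∈ L, β ∈ S

/-- The depth of `α` in a monomial `S` of `N(v)`: the maximal length of a strictly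
decreasing chain of elements of `S` ending at `α`. -/
noncomputable def depth (S : Multiset (ℕ × ℕ)) (α : ℕ × ℕ) : ℕ :=
  sSup {k | ∃ L, IsChainIn S L ∧ L.getLast? = some α ∧ L.length = k}

/-- The o-depth of `α` in a `v`-chain `C`: the depth of `q_{C,α}` in `𝔖_C`. -/
noncomputable def odepthC (d : ℕ) (C : List (ℕ × ℕ)) (α : ℕ × ℕ) : ℕ :=
  depth (SC d C) (qCa d C α)

/-- The o-depth of `α` in a monomial `S` of `ON(v)`: the maximum of `odepthC` over
all `v`-chains in `S` containing `α`. -/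
noncomputable def odepthM (d : ℕ) (v : Finset ℕ) (S : Multiset (ℕ × ℕ)) (α : ℕ × ℕ) : ℕ :=
  sSup {k | ∃ C, IsVChain d v C ∧ (∀ β ∈ C, β ∈ S) ∧ α ∈ C ∧ odepthC d C α = k}

/-- A distinguished subset of `N(v)`. -/
def Distinguished (d : ℕ) (v : Finset ℕ) (S : Finset (ℕ × ℕ)) : Prop :=
  (∀ p ∈ S, inN d v p) ∧
  ∀ A ∈ S, ∀ B ∈ S, A ≠ B →
    A.1 ≠ B.1 ∧ A.2 ≠ B.2 ∧ (B.1 < A.1 → (B.1 < A.2 ∨ A.2 < B.2))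

/-- The element of `I(d,2d)` attached to a distinguished subset `S` of `N(v)`:
remove from `v` the column indices of elements of `S` and add their row indices. -/
def toW (v : Finset ℕ) (S : Finset (ℕ × ℕ)) : Finset ℕ :=
  (v \ S.image Prod.snd) ∪ S.image Prod.fst

/-- `w(C) = w_C`, the element of `I(d,2d)` attached to the `v`-chain `C` via the
distinguished subset `𝔖_C`. -/
def wC (d : ℕ) (v : Finset ℕ) (C : List (ℕ × ℕ)) : Finset ℕ :=
  toW v (SC d C).toFinset

/-- `w` ortho-dominates a monomial `S` in `ON(v)`: `w ≥ w(C)` for every `v`-chain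
`C` contained in `S`. -/
def ODominates (d : ℕ) (v w : Finset ℕ) (S : Multiset (ℕ × ℕ)) : Prop :=
  ∀ C : List (ℕ × ℕ), IsVChain d v C → (∀ β ∈ C, β ∈ S) → leI (wC d v C) w

/-- `x` dominates a monomial `S` in `N(v)` (in the sense of the Grassmannian case):
`x ≥ w_L` for every strictly decreasing chain `L` contained in `S`. -/
def Dominates (d : ℕ) (v x : Finset ℕ) (S : Multiset (ℕ × ℕ)) : Prop :=
  ∀ L : List (ℕ × ℕ), L.Chain' pgt → (∀ β ∈ L, β ∈ S) → leI (toW v L.toFinset) x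

/-- The `v`-degree of `θ`: half the cardinality of `v \ θ`. -/
def vdeg (v θ : Finset ℕ) : ℕ := (v \ θ).card / 2

/-- the element next to `α` in the list `C`. -/
def nextInC (C : List (ℕ × ℕ)) (α : ℕ × ℕ) : Option (ℕ × ℕ) :=
  C[C.idxOf α + 1]?

/-- The critical element of a `v`-chain: its first element whose horizontal projection
does not belong to `N(v)` (i.e. with `r ≤ r*`). -/
def critical (d : ℕ) (C : List (ℕ × ℕ)) : Option (ℕ × ℕ) :=
  C.find? (fun x => decide (x.1 ≤ star d x.1))

/-- `α` is the last element of its connected component in `C`. -/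
def isCompLast (d : ℕ) (C : List (ℕ × ℕ)) (α : ℕ × ℕ) : Prop :=
  ∃ g ∈ components d C, g.getLast? = some α

/-- The condition (*): `α` has type H in `C` and `p_h(α) ≯ β'` for some `β' ∈ 𝔖_{C,β}`. -/
def starCond (d : ℕ) (C : List (ℕ × ℕ)) (α β : ℕ × ℕ) : Prop :=
  typeOf d C α = VType.H ∧ ∃ β' ∈ SCa d C β, ¬ pgt (ph d α) β'

/-- A standard monomial in `I(d)`: a weakly decreasing sequence of elements of `I(d)`. -/
def IsStdMon (d : ℕ) (L : List (Finset ℕ)) : Prop :=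
  (∀ θ ∈ L, θ ∈ Iset d) ∧ L.Chain' (fun a b => leI b a)

/-- A standard monomial is `w`-dominated if `w ≥ θ₁`. -/
def WDominated (w : Finset ℕ) (L : List (Finset ℕ)) : Prop :=
  ∀ θ, L.head? = some θ → leI θ w

/-- A standard monomial is `v`-compatible if each member is comparable with `v`
and distinct from `v`. -/
def VCompatible (v : Finset ℕ) (L : List (Finset ℕ)) : Prop :=
  ∀ θ ∈ L, θ ≠ v ∧ (leI θ v ∨ leI v θ)

/-- The degree of a standard monomial: the sum of the `v`-degrees of its members. -/
def stdDeg (v : Finset ℕ) (L : List (Finset ℕ)) : ℕ :=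
  (L.map (fun θ => vdeg v θ)).sum

end OG
namespace OGAux
open OG List

instance : IsTrans (ℕ × ℕ) pgt where
  trans a b c hab hbc := ⟨Nat.lt_trans hbc.1 hab.1, Nat.lt_trans hab.2 hbc.2⟩

lemma pgt_asymm {a b : ℕ × ℕ} (h1 : pgt a b) (h2 : pgt b a) : False := by
  unfold pgt at *; omega

lemma pgt_irrefl {a : ℕ × ℕ} (h : pgt a a) : False := by unfold pgt at h; omega

section Ctx
variable {d : ℕ} {v : Finset ℕ} {C : List (ℕ × ℕ)}

lemma hpair (hC : IsVChain d v C) : C.Pairwise pgt := isChain_iff_pairwise.mp hC.1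

lemma hnodup (hC : IsVChain d v C) : C.Nodup :=
  (hpair hC).imp (fun h => by rintro rfl; exact pgt_irrefl h)

lemma bnd (hC : IsVChain d v C) {α : ℕ × ℕ} (h : α ∈ C) :
    1 ≤ α.2 ∧ α.2 < α.1 ∧ α.1 + α.2 ≤ 2 * d := by
  obtain ⟨⟨n1, n2, n3, n4, n5, n6, n7⟩, ⟨o1, o2, o3, o4, o5, o6, o7⟩⟩ := hC.2 α h
  refine ⟨n3, n7, ?_⟩
  unfold OG.star at o7; omega

lemma tri (hC : IsVChain d v C) {a b : ℕ × ℕ} (ha : a ∈ C) (hb : b ∈ C) :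
    a = b ∨ pgt a b ∨ pgt b a := by
  by_cases h : a = b
  · exact Or.inl h
  · right
    have hsym : Symmetric (fun x y : ℕ × ℕ => pgt x y ∨ pgt y x) := fun x y hh => hh.symm
    exact (haveI : Std.Symm (fun x y : ℕ × ℕ => pgt x y ∨ pgt y x) := ⟨fun _ _ hh => hsym hh⟩; List.Pairwise.forall (R := fun x y : ℕ × ℕ => pgt x y ∨ pgt y x) ((hpair hC).imp (fun hab => Or.inl hab)) ha hb h)

lemma before_of_col (hC : IsVChain d v C) {a b : ℕ × ℕ} (ha : a ∈ C) (hb : b ∈ C)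
    (h : a.2 < b.2) : pgt a b := by
  rcases tri hC ha hb with rfl | h1 | h1
  · omega
  · exact h1
  · exfalso; unfold pgt at h1; omega

lemma before_of_row (hC : IsVChain d v C) {a b : ℕ × ℕ} (ha : a ∈ C) (hb : b ∈ C)
    (h : b.1 < a.1) : pgt a b := by
  rcases tri hC ha hb with rfl | h1 | h1
  · omega
  · exact h1
  · exfalso; unfold pgt at h1; omega

/-! ### components machinery -/

lemma flatten_comps : (components d C).flatten = C := by
  unfold components; exact List.flatten_splitBy _ _

lemma comp_ne_nil {g : List (ℕ × ℕ)} (hg : g ∈ components d C) : g ≠ [] :=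
  List.ne_nil_of_mem_splitBy hg

lemma mem_of_mem_comp {g : List (ℕ × ℕ)} {x : ℕ × ℕ} (hg : g ∈ components d C) (hx : x ∈ g) :
    x ∈ C := by
  rw [← flatten_comps (d := d) (C := C)]; exact List.mem_flatten.mpr ⟨g, hg, hx⟩

lemma exists_comp {x : ℕ × ℕ} (hx : x ∈ C) : ∃ g ∈ components d C, x ∈ g := by
  rw [← flatten_comps (d := d) (C := C)] at hx; exact List.mem_flatten.mp hx

lemma comp_chain {g : List (ℕ × ℕ)} (hg : g ∈ components d C) : g.Chain' (Connected d) := by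
  have h := List.isChain_of_mem_splitBy hg
  exact h.imp (fun hxy => by simpa using hxy)

lemma comps_props (hC : IsVChain d v C) :
    (∀ g ∈ components d C, g.Pairwise pgt) ∧
    (components d C).Pairwise (fun g h => ∀ x ∈ g, ∀ y ∈ h, pgt x y) := by
  have h := hpair hC
  rw [← flatten_comps (d := d) (C := C)] at h
  exact List.pairwise_flatten.mp h

lemma comps_nodup (hC : IsVChain d v C) :
    (∀ g ∈ components d C, g.Nodup) ∧ (components d C).Pairwise List.Disjoint := by
  have h := hnodup hC
  rw [← flatten_comps (d := d) (C := C)] at h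
  exact List.nodup_flatten.mp h

lemma find?_of_mem_unique {gs : List (List (ℕ × ℕ))} (hd : gs.Pairwise List.Disjoint)
    {g : List (ℕ × ℕ)} {u : ℕ × ℕ} (hg : g ∈ gs) (hu : u ∈ g) :
    gs.find? (fun h => decide (u ∈ h)) = some g := by
  induction gs with
  | nil => cases hg
  | cons g₁ rest ih =>
    rcases List.mem_cons.mp hg with rfl | hg'
    · exact List.find?_cons_of_pos (by simpa using hu)
    · have hdisj : ∀ h ∈ rest, List.Disjoint g₁ h := (List.pairwise_cons.mp hd).1
      have hnot : u ∉ g₁ := fun hu1 => hdisj g hg' hu1 hu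
      rw [List.find?_cons_of_neg (by simpa using hnot)]
      exact ih hd.of_cons hg'

lemma comp_unique (hC : IsVChain d v C) {g h : List (ℕ × ℕ)} {u : ℕ × ℕ}
    (hg : g ∈ components d C) (hh : h ∈ components d C) (hug : u ∈ g) (huh : u ∈ h) : g = h := by
  have h1 := find?_of_mem_unique (comps_nodup hC).2 hg hug
  have h2 := find?_of_mem_unique (comps_nodup hC).2 hh huh
  rw [h1] at h2; exact Option.some_inj.mp h2

lemma typeOf_spec (hC : IsVChain d v C) {g : List (ℕ × ℕ)} {u : ℕ × ℕ}
    (hg : g ∈ components d C) (hu : u ∈ g) :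
    typeOf d C u = if g.getLast? = some u ∧ Odd g.length
      then (if star d u.1 < u.1 then VType.H else VType.S) else VType.V := by
  unfold typeOf
  rw [find?_of_mem_unique (comps_nodup hC).2 hg hu]

lemma typeOf_V (hC : IsVChain d v C) {g : List (ℕ × ℕ)} {u : ℕ × ℕ}
    (hg : g ∈ components d C) (hu : u ∈ g) (hne : g.getLast? ≠ some u) :
    typeOf d C u = VType.V := by
  rw [typeOf_spec hC hg hu, if_neg (by tauto)]

lemma typeOf_H_props (hC : IsVChain d v C) {u : ℕ × ℕ} (hu : u ∈ C)
    (h : typeOf d C u = VType.H) :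
    ∃ g ∈ components d C, u ∈ g ∧ g.getLast? = some u ∧ Odd g.length ∧ star d u.1 < u.1 := by
  obtain ⟨g, hg, hug⟩ := exists_comp hu
  refine ⟨g, hg, hug, ?_⟩
  rw [typeOf_spec hC hg hug] at h
  by_cases h1 : g.getLast? = some u ∧ Odd g.length
  · rw [if_pos h1] at h
    by_cases h2 : star d u.1 < u.1
    · exact ⟨h1.1, h1.2, h2⟩
    · rw [if_neg h2] at h; cases h
  · rw [if_neg h1] at h; cases h

lemma typeOf_S_props (hC : IsVChain d v C) {u : ℕ × ℕ} (hu : u ∈ C)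
    (h : typeOf d C u = VType.S) :
    ∃ g ∈ components d C, u ∈ g ∧ g.getLast? = some u ∧ Odd g.length ∧ ¬ star d u.1 < u.1 := by
  obtain ⟨g, hg, hug⟩ := exists_comp hu
  refine ⟨g, hg, hug, ?_⟩
  rw [typeOf_spec hC hg hug] at h
  by_cases h1 : g.getLast? = some u ∧ Odd g.length
  · rw [if_pos h1] at h
    by_cases h2 : star d u.1 < u.1
    · rw [if_pos h2] at h; cases h
    · exact ⟨h1.1, h1.2, h2⟩
  · rw [if_neg h1] at h; cases h

lemma H_row (hC : IsVChain d v C) {u : ℕ × ℕ} (hu : u ∈ C) (h : typeOf d C u = VType.H) :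
    d + 1 ≤ u.1 := by
  obtain ⟨g, _, _, _, _, hs⟩ := typeOf_H_props hC hu h
  have hb := bnd hC hu
  unfold OG.star at hs; omega

lemma S_row (hC : IsVChain d v C) {u : ℕ × ℕ} (hu : u ∈ C) (h : typeOf d C u = VType.S) :
    u.1 ≤ d := by
  obtain ⟨g, _, _, _, _, hs⟩ := typeOf_S_props hC hu h
  have hb := bnd hC hu
  unfold OG.star at hs; omega

end Ctx
end OGAux
namespace OGAux
open OG List
section Ctx2
variable {d : ℕ} {v : Finset ℕ} {C : List (ℕ × ℕ)}

lemma next_in_chain {Rel : ℕ × ℕ → ℕ × ℕ → Prop} :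
    ∀ {l : List (ℕ × ℕ)}, l.Chain' Rel → l.Pairwise pgt → ∀ {a}, a ∈ l →
      l.getLast? ≠ some a → ∃ b ∈ l, Rel a b ∧ pgt a b := by
  intro l
  induction l with
  | nil => intro _ _ a ha; cases ha
  | cons x t ih =>
    intro hch hp a ha hne
    rcases List.mem_cons.mp ha with rfl | hat
    · cases t with
      | nil => simp at hne
      | cons y t' =>
        exact ⟨y, by simp, (List.isChain_cons_cons.mp hch).1, List.rel_of_pairwise_cons hp (by simp)⟩
    · have hne' : t.getLast? ≠ some a := by
        cases t with
        | nil => cases hat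
        | cons y t' => rwa [List.getLast?_cons_cons] at hne
      obtain ⟨b, hb, h1, h2⟩ := ih hch.tail (List.Pairwise.of_cons hp) hat hne'
      exact ⟨b, by simp [hb], h1, h2⟩

lemma prev_last {Rel : ℕ × ℕ → ℕ × ℕ → Prop} :
    ∀ {l : List (ℕ × ℕ)}, l.Chain' Rel → l.Pairwise pgt → 2 ≤ l.length →
      ∀ {a}, l.getLast? = some a → ∃ z ∈ l, Rel z a ∧ pgt z a := by
  intro l
  induction l with
  | nil => simp
  | cons x t ih =>
    intro hch hp hlen a hla
    cases t with
    | nil => simp at hlen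
    | cons y t' =>
      cases t' with
      | nil =>
        have hay : a = y := by simp at hla; exact hla.symm
        subst hay
        exact ⟨x, by simp, (List.isChain_cons_cons.mp hch).1, List.rel_of_pairwise_cons hp (by simp)⟩
      | cons w t'' =>
        have hla' : (y :: w :: t'').getLast? = some a := by
          rwa [List.getLast?_cons_cons] at hla
        obtain ⟨z, hz, h1, h2⟩ := ih hch.tail hp.of_cons (by simp) hla'
        exact ⟨z, by simp [hz], h1, h2⟩

lemma nextcomp (hC : IsVChain d v C) {u w : ℕ × ℕ} {g : List (ℕ × ℕ)}
    (hg : g ∈ components d C) (hgl : g.getLast? = some u)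
    (hw : w ∈ C) (huw : pgt u w) :
    ∃ x ∈ C, pgt u x ∧ ¬ Connected d u x ∧ ∀ z ∈ C, pgt u z → x = z ∨ pgt x z := by
  classical
  obtain ⟨pre, rest, hsplit⟩ := List.append_of_mem hg
  obtain ⟨init, hginit⟩ := List.getLast?_eq_some_iff.mp hgl
  have hcross := (comps_props hC).2
  rw [hsplit] at hcross
  have hwithin := (comps_props hC).1
  have hu_mem : u ∈ g := by rw [hginit]; simp
  have hmemg : ∀ z, z ∈ g → pgt u z → False := by
    intro z hz hpz
    rw [hginit] at hz
    rcases List.mem_append.mp hz with hz | hz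
    · have hp := hwithin g hg
      rw [hginit] at hp
      exact pgt_asymm hpz ((List.pairwise_append.mp hp).2.2 z hz u (by simp))
    · simp at hz; subst hz; exact pgt_irrefl hpz
  have hmempre : ∀ h ∈ pre, ∀ z ∈ h, pgt u z → False := by
    intro h hh z hz hpz
    exact pgt_asymm hpz
      ((List.pairwise_append.mp hcross).2.2 h hh g (by simp) z hz u hu_mem)
  obtain ⟨g₂, rest', rfl⟩ : ∃ g₂ rest', rest = g₂ :: rest' := by
    cases rest with
    | cons g₂ r => exact ⟨g₂, r, rfl⟩
    | nil =>
      exfalso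
      have hwC := hw
      rw [← flatten_comps (d := d) (C := C), hsplit] at hwC
      rcases List.mem_flatten.mp hwC with ⟨h, hh, hzh⟩
      rcases List.mem_append.mp hh with hh | hh
      · exact hmempre h hh w hzh huw
      · simp at hh; subst hh; exact hmemg w hzh huw
  have hg2 : g₂ ∈ components d C := by rw [hsplit]; simp
  obtain ⟨x, tail, rfl⟩ : ∃ x tail, g₂ = x :: tail := by
    cases g₂ with
    | nil => exact (comp_ne_nil hg2 rfl).elim
    | cons x tail => exact ⟨x, tail, rfl⟩
  have hxC : x ∈ C := mem_of_mem_comp hg2 (by simp)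
  have hux : pgt u x := by
    have h1 := (List.pairwise_append.mp hcross).2.1
    exact (List.pairwise_cons.mp h1).1 (x :: tail) (by simp) u hu_mem x (by simp)
  have hnc : ¬ Connected d u x := by
    have hchain := List.isChain_getLast_head_splitBy (fun a b => decide (Connected d a b)) C
    rw [show C.splitBy (fun a b => decide (Connected d a b)) = components d C from rfl,
      hsplit] at hchain
    have hinfix : [g, x :: tail] <:+: pre ++ g :: (x :: tail) :: rest' := ⟨pre, rest', by simp⟩
    have h2 := hchain.infix hinfix
    rw [List.isChain_pair] at h2
    obtain ⟨h1, h2', h3⟩ := h2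
    have hgl' : g.getLast h1 = u := by
      have h4 := List.getLast?_eq_getLast h1
      rw [hgl] at h4; exact (Option.some_inj.mp h4).symm
    rw [hgl'] at h3
    exact of_decide_eq_false h3
  refine ⟨x, hxC, hux, hnc, ?_⟩
  intro z hz hpz
  rw [← flatten_comps (d := d) (C := C), hsplit] at hz
  rcases List.mem_flatten.mp hz with ⟨h, hh, hzh⟩
  rcases List.mem_append.mp hh with hh | hh
  · exact (hmempre h hh z hzh hpz).elim
  · rcases List.mem_cons.mp hh with rfl | hh
    · exact (hmemg z hzh hpz).elim
    · rcases List.mem_cons.mp hh with rfl | hh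
      · rcases List.mem_cons.mp hzh with rfl | hzt
        · exact Or.inl rfl
        · exact Or.inr (List.rel_of_pairwise_cons (hwithin _ hg2) hzt)
      · right
        have h2 := (List.pairwise_append.mp hcross).2.1
        have h3 := (List.pairwise_cons.mp h2).2
        exact (List.pairwise_cons.mp h3).1 h hh x (by simp) z hzh

lemma coreB (hC : IsVChain d v C) {β γ : ℕ × ℕ} (hβ : β ∈ C) (hγ : γ ∈ C) (hbg : pgt β γ)
    (hβH : typeOf d C β = VType.H) (hcle : γ.2 ≤ star d β.1)
    (hγS : typeOf d C γ ≠ VType.S) : False := by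
  obtain ⟨gβ, hgβ, hβgβ, hglβ, _, hstarβ⟩ := typeOf_H_props hC hβ hβH
  have hbβ := bnd hC hβ
  have hbγ := bnd hC hγ
  obtain ⟨x, hxC, hβx, hnc, hmin⟩ := nextcomp hC hgβ hglβ hγ hbg
  have hxb := bnd hC hxC
  have hxγ : x.2 ≤ γ.2 ∧ γ.1 ≤ x.1 := by
    rcases hmin γ hγ hbg with rfl | h
    · exact ⟨le_refl _, le_refl _⟩
    · unfold pgt at h; omega
  have hxr : x.1 ≤ star d β.1 := by
    by_contra hcon
    exact hnc ⟨le_trans hxγ.1 hcle, by omega⟩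
  unfold OG.star at hstarβ hcle hxr
  have hγd : γ.1 ≤ d := by omega
  cases hty : typeOf d C γ with
  | H => have := H_row hC hγ hty; omega
  | S => exact hγS hty
  | V =>
    obtain ⟨gγ, hgγ, hγgγ⟩ := exists_comp hγ
    by_cases hlg : gγ.getLast? = some γ
    · have hEv : ¬ Odd gγ.length := by
        intro ho
        rw [typeOf_spec hC hgγ hγgγ, if_pos ⟨hlg, ho⟩] at hty
        split at hty <;> cases hty
      have hlen2 : 2 ≤ gγ.length := by
        have hne := comp_ne_nil hgγ
        have hpos : 0 < gγ.length := List.length_pos_iff.mpr hne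
        rcases Nat.even_or_odd gγ.length with he | ho
        · obtain ⟨c, hc⟩ := he; omega
        · exact (hEv ho).elim
      obtain ⟨z, hzg, hconn, hzγ⟩ :=
        prev_last (comp_chain hgγ) ((comps_props hC).1 _ hgγ) hlen2 hlg
      have hzC : z ∈ C := mem_of_mem_comp hgγ hzg
      have hbz := bnd hC hzC
      have hzd : d + 1 ≤ z.1 := by
        have h1 := hconn.2
        unfold OG.star at h1; omega
      have hne : gβ ≠ gγ := by
        intro h; subst h
        rw [hglβ] at hlg
        have hβγ : β = γ := Option.some_inj.mp hlg
        exact pgt_irrefl (hβγ ▸ hbg)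
      have hcr : ∀ a ∈ gβ, ∀ b ∈ gγ, pgt a b := by
        have hsymm : Symmetric (fun g h : List (ℕ × ℕ) =>
            (∀ a ∈ g, ∀ b ∈ h, pgt a b) ∨ (∀ a ∈ h, ∀ b ∈ g, pgt a b)) :=
          fun g h hh => hh.symm
        have hP : (components d C).Pairwise (fun g h : List (ℕ × ℕ) =>
            (∀ a ∈ g, ∀ b ∈ h, pgt a b) ∨ (∀ a ∈ h, ∀ b ∈ g, pgt a b)) :=
          ((comps_props hC).2).imp (fun hab => Or.inl hab)
        rcases (haveI : Std.Symm (fun g h : List (ℕ × ℕ) => (∀ a ∈ g, ∀ b ∈ h, pgt a b) ∨ (∀ a ∈ h, ∀ b ∈ g, pgt a b)) := ⟨fun _ _ hh => hsymm hh⟩; List.Pairwise.forall hP hgβ hgγ hne) with h | h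
        · exact h
        · exact (pgt_asymm hbg (h γ hγgγ β hβgβ)).elim
      have hβz : pgt β z := hcr β hβgβ z hzg
      rcases hmin z hzC hβz with rfl | hxz
      · omega
      · unfold pgt at hxz; omega
    · obtain ⟨δ, hδg, hconn, hγδ⟩ :=
        next_in_chain (comp_chain hgγ) ((comps_props hC).1 _ hgγ) hγgγ hlg
      have hbδ := bnd hC (mem_of_mem_comp hgγ hδg)
      have h1 := hconn.2
      unfold OG.star at h1
      unfold pgt at hγδ
      omega

end Ctx2
end OGAux
namespace OGAux
open OG List
section Ctx3
variable {d : ℕ} {v : Finset ℕ} {C : List (ℕ × ℕ)}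

lemma list_sum_mem {γ : Type*} [DecidableEq γ] {l : List (Multiset γ)} {y : γ} :
    y ∈ l.sum ↔ ∃ m ∈ l, y ∈ m := by
  induction l with
  | nil => simp
  | cons a t ih => simp [List.sum_cons, Multiset.mem_add, ih]

lemma mem_SC_iff {y : ℕ × ℕ} : y ∈ SC d C ↔ ∃ β ∈ C, y ∈ SCa d C β := by
  unfold SC
  rw [list_sum_mem]
  constructor
  · rintro ⟨m, hm, hym⟩
    obtain ⟨β, hβ, rfl⟩ := List.mem_map.mp hm
    exact ⟨β, hβ, hym⟩
  · rintro ⟨β, hβ, hy⟩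
    exact ⟨SCa d C β, List.mem_map.mpr ⟨β, hβ, rfl⟩, hy⟩

lemma SCa_V {β : ℕ × ℕ} (h : typeOf d C β = VType.V) : SCa d C β = {pv d β} := by
  unfold SCa; rw [h]

lemma SCa_H {β : ℕ × ℕ} (h : typeOf d C β = VType.H) : SCa d C β = {pv d β, ph d β} := by
  unfold SCa; rw [h]

lemma SCa_S {β : ℕ × ℕ} (h : typeOf d C β = VType.S) : SCa d C β = {β, hash d β} := by
  unfold SCa; rw [h]

/-- blocks for the diagonal chain `W` -/
def blk (d : ℕ) (C : List (ℕ × ℕ)) (β : ℕ × ℕ) : List (ℕ × ℕ) :=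
  match typeOf d C β with
  | VType.V => [pv d β]
  | VType.H => [pv d β, ph d β]
  | VType.S => []

lemma blk_V {β : ℕ × ℕ} (h : typeOf d C β = VType.V) : blk d C β = [pv d β] := by
  unfold blk; rw [h]

lemma blk_H {β : ℕ × ℕ} (h : typeOf d C β = VType.H) : blk d C β = [pv d β, ph d β] := by
  unfold blk; rw [h]

lemma blk_S {β : ℕ × ℕ} (h : typeOf d C β = VType.S) : blk d C β = [] := by
  unfold blk; rw [h]

lemma blk_sub_SCa {β : ℕ × ℕ} {x : ℕ × ℕ} (hx : x ∈ blk d C β) : x ∈ SCa d C β := by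
  cases h : typeOf d C β with
  | V => rw [blk_V h] at hx; rw [SCa_V h]; simp at hx; simp [hx]
  | H =>
    rw [blk_H h] at hx; rw [SCa_H h]; simp at hx
    rcases hx with rfl | rfl <;> simp
  | S => rw [blk_S h] at hx; cases hx

lemma mem_SC_of_blk {β x : ℕ × ℕ} (hβ : β ∈ C) (hx : x ∈ blk d C β) : x ∈ SC d C :=
  mem_SC_iff.mpr ⟨β, hβ, blk_sub_SCa hx⟩

/-- the diagonal witness chain ending at `pv j` -/
def Wl (d : ℕ) (C : List (ℕ × ℕ)) (j : ℕ × ℕ) : List (ℕ × ℕ) :=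
  ((C.filter (fun β => decide (pgt β j))).flatMap (blk d C)) ++ [pv d j]

lemma blk_cross (hC : IsVChain d v C) {β γ : ℕ × ℕ} (hβ : β ∈ C) (hγ : γ ∈ C)
    (hbg : pgt β γ) : ∀ x ∈ blk d C β, ∀ y ∈ blk d C γ, pgt x y := by
  have hbβ := bnd hC hβ
  have hbγ := bnd hC hγ
  have hbg' := hbg
  unfold pgt at hbg'
  intro x hx y hy
  cases hg : typeOf d C γ with
  | S => rw [blk_S hg] at hy; cases hy
  | V =>
    rw [blk_V hg] at hy; simp at hy; subst hy
    cases hb : typeOf d C β with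
    | S => rw [blk_S hb] at hx; cases hx
    | V =>
      rw [blk_V hb] at hx; simp at hx; subst hx
      unfold pgt pv OG.star; constructor <;> simp <;> omega
    | H =>
      rw [blk_H hb] at hx
      simp at hx
      rcases hx with hx | hx
      · subst hx
        unfold pgt pv OG.star; constructor <;> simp <;> omega
      · subst hx
        have hT : star d β.1 < γ.2 := by
          by_contra hT
          exact coreB hC hβ hγ hbg hb (by omega) (by simp [hg])
        unfold OG.star at hT
        unfold pgt ph pv OG.star; constructor <;> simp <;> omega
  | H =>
    rw [blk_H hg] at hy
    have hyc : y = pv d γ ∨ y = ph d γ := by simpa using hy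
    cases hb : typeOf d C β with
    | S => rw [blk_S hb] at hx; cases hx
    | V =>
      rw [blk_V hb] at hx; simp at hx; subst hx
      rcases hyc with rfl | rfl
      · unfold pgt pv OG.star; constructor <;> simp <;> omega
      · unfold pgt pv ph OG.star; constructor <;> simp <;> omega
    | H =>
      rw [blk_H hb] at hx
      have hxc : x = pv d β ∨ x = ph d β := by simpa using hx
      rcases hxc with rfl | rfl
      · rcases hyc with rfl | rfl
        · unfold pgt pv OG.star; constructor <;> simp <;> omega
        · unfold pgt pv ph OG.star; constructor <;> simp <;> omega
      · rcases hyc with rfl | rfl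
        · have hT : star d β.1 < γ.2 := by
            by_contra hT
            exact coreB hC hβ hγ hbg hb (by omega) (by simp [hg])
          unfold OG.star at hT
          unfold pgt ph pv OG.star; constructor <;> simp <;> omega
        · unfold pgt ph OG.star; constructor <;> simp <;> omega

lemma mem_filtered {j β : ℕ × ℕ} (h : β ∈ C.filter (fun β => decide (pgt β j))) :
    β ∈ C ∧ pgt β j := by
  have := List.mem_filter.mp h
  exact ⟨this.1, by simpa using this.2⟩

lemma Wl_pairwise (hC : IsVChain d v C) {j : ℕ × ℕ} (hj : j ∈ C)
    (hjH : typeOf d C j = VType.H) : (Wl d C j).Pairwise pgt := by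
  have hbj := bnd hC hj
  unfold Wl
  rw [List.pairwise_append]
  refine ⟨?_, List.pairwise_singleton _ _, ?_⟩
  · rw [List.flatMap_def, List.pairwise_flatten]
    constructor
    · intro l hl
      obtain ⟨β, hβ, rfl⟩ := List.mem_map.mp hl
      have hβC := (mem_filtered hβ).1
      have hbβ := bnd hC hβC
      cases hb : typeOf d C β with
      | V => rw [blk_V hb]; simp
      | S => rw [blk_S hb]; simp
      | H =>
        rw [blk_H hb]
        refine List.pairwise_cons.mpr ⟨?_, by simp⟩
        intro y hy; simp at hy; subst hy
        unfold pgt pv ph OG.star; constructor <;> simp <;> omega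
    · rw [List.pairwise_map]
      refine List.Pairwise.imp_of_mem ?_ ((hpair hC).filter _)
      intro a b ha hb hab
      exact blk_cross hC (mem_filtered ha).1 (mem_filtered hb).1 hab
  · intro x hx y hy
    simp only [List.mem_singleton] at hy; subst hy
    rw [List.mem_flatMap] at hx
    obtain ⟨β, hβf, hxb⟩ := hx
    obtain ⟨hβC, hβj⟩ := mem_filtered hβf
    have := blk_cross hC hβC hj hβj x hxb (pv d j) (by rw [blk_H hjH]; simp)
    exact this

lemma Wl_chain (hC : IsVChain d v C) {j : ℕ × ℕ} (hj : j ∈ C)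
    (hjH : typeOf d C j = VType.H) : (Wl d C j).Chain' pgt :=
  (Wl_pairwise hC hj hjH).isChain

lemma Wl_mem_SC (hC : IsVChain d v C) {j : ℕ × ℕ} (hj : j ∈ C)
    (hjH : typeOf d C j = VType.H) : ∀ x ∈ Wl d C j, x ∈ SC d C := by
  intro x hx
  unfold Wl at hx
  rcases List.mem_append.mp hx with hx | hx
  · rw [List.mem_flatMap] at hx
    obtain ⟨β, hβf, hxb⟩ := hx
    exact mem_SC_of_blk (mem_filtered hβf).1 hxb
  · simp only [List.mem_singleton] at hx; subst hx
    exact mem_SC_of_blk hj (by rw [blk_H hjH]; simp)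

lemma Wl_getLast {j : ℕ × ℕ} : (Wl d C j).getLast? = some (pv d j) := by
  unfold Wl; exact List.getLast?_concat

end Ctx3
end OGAux
namespace OGAux
open OG List
section Ctx4
variable {d : ℕ} {v : Finset ℕ} {C : List (ℕ × ℕ)}

lemma even_list_sum {l : List ℕ} (h : ∀ x ∈ l, Even x) : Even l.sum := by
  induction l with
  | nil => simp
  | cons a t ih =>
    rw [List.sum_cons]
    exact (h a (by simp)).add (ih fun x hx => h x (by simp [hx]))

lemma sum_map_ones {l : List (ℕ × ℕ)} {f : ℕ × ℕ → ℕ} (h : ∀ x ∈ l, f x = 1) :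
    (l.map f).sum = l.length := by
  induction l with
  | nil => simp
  | cons a t ih =>
    simp only [List.map_cons, List.sum_cons, List.length_cons]
    rw [h a (by simp), ih fun x hx => h x (by simp [hx])]
    omega

lemma comps_forall (hC : IsVChain d v C) {g h : List (ℕ × ℕ)}
    (hg : g ∈ components d C) (hh : h ∈ components d C) (hne : g ≠ h) :
    (∀ a ∈ g, ∀ b ∈ h, pgt a b) ∨ (∀ a ∈ h, ∀ b ∈ g, pgt a b) := by
  have hsymm : Symmetric (fun g h : List (ℕ × ℕ) =>
      (∀ a ∈ g, ∀ b ∈ h, pgt a b) ∨ (∀ a ∈ h, ∀ b ∈ g, pgt a b)) :=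
    fun g h hh => hh.symm
  have hP : (components d C).Pairwise (fun g h : List (ℕ × ℕ) =>
      (∀ a ∈ g, ∀ b ∈ h, pgt a b) ∨ (∀ a ∈ h, ∀ b ∈ g, pgt a b)) :=
    ((comps_props hC).2).imp (fun hab => Or.inl hab)
  exact (haveI : Std.Symm (fun g h : List (ℕ × ℕ) => (∀ a ∈ g, ∀ b ∈ h, pgt a b) ∨ (∀ a ∈ h, ∀ b ∈ g, pgt a b)) := ⟨fun _ _ hh => hsymm hh⟩; List.Pairwise.forall hP hg hh hne)

lemma Wl_odd (hC : IsVChain d v C) {j : ℕ × ℕ} (hj : j ∈ C)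
    (hjH : typeOf d C j = VType.H) : Odd (Wl d C j).length := by
  unfold Wl
  rw [List.length_append]
  have hEv : Even ((C.filter (fun β => decide (pgt β j))).flatMap (blk d C)).length := by
    rw [List.length_flatMap]
    have hfil : C.filter (fun β => decide (pgt β j)) =
        ((components d C).map (List.filter (fun β => decide (pgt β j)))).flatten := by
      conv_lhs => rw [← flatten_comps (d := d) (C := C)]
      rw [List.filter_flatten]
    rw [hfil, List.map_flatten, List.sum_flatten, List.map_map, List.map_map]
    apply even_list_sum
    intro s hs
    obtain ⟨g, hg, rfl⟩ := List.mem_map.mp hs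
    simp only [Function.comp]
    obtain ⟨gj, hgj, hjgj, hl', ho', _⟩ := typeOf_H_props hC hj hjH
    by_cases hjg : j ∈ g
    · -- g is j's component
      have hgg : g = gj := comp_unique hC hg hgj hjg hjgj
      subst hgg
      obtain ⟨init, hinit⟩ := List.getLast?_eq_some_iff.mp hl'
      have hpg := (comps_props hC).1 _ hg
      have hnd := (comps_nodup hC).1 _ hg
      rw [hinit] at hpg hnd ho' hg ⊢
      have hjni : j ∉ init := by
        intro hji
        exact ((List.pairwise_append.mp hnd).2.2 j hji j (by simp)) rfl
      have h1 : init.filter (fun β => decide (pgt β j)) = init :=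
        List.filter_eq_self.mpr (fun a ha => by
          simp only [decide_eq_true_eq]
          exact (List.pairwise_append.mp hpg).2.2 a ha j (by simp))
      have h2 : [j].filter (fun β => decide (pgt β j)) = [] := by
        simp only [List.filter_cons, List.filter_nil]
        rw [if_neg (by simp [pgt])]
      rw [List.filter_append, h1, h2, List.append_nil]
      rw [sum_map_ones ?_]
      · obtain ⟨c, hc⟩ := ho'
        rw [List.length_append] at hc
        simp only [List.length_singleton] at hc
        exact ⟨c, by omega⟩
      · intro u hu
        have hV : typeOf d C u = VType.V := by
          apply typeOf_V hC hg (by simp [hu])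
          rw [List.getLast?_concat]
          intro hcon
          exact hjni ((Option.some_inj.mp hcon) ▸ hu)
        simp [blk_V hV]
    · -- j not in g
      have hne : g ≠ gj := fun h => hjg (h ▸ hjgj)
      rcases comps_forall hC hg hgj hne with hcr | hcr
      · -- g entirely before j
        have hfil2 : g.filter (fun β => decide (pgt β j)) = g :=
          List.filter_eq_self.mpr (fun a ha => by
            simp only [decide_eq_true_eq]
            exact hcr a ha j hjgj)
        rw [hfil2]
        obtain ⟨init, e, rfl⟩ : ∃ init e, g = init ++ [e] := by
          rcases List.eq_nil_or_concat g with rfl | ⟨init, e, he⟩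
          · exact (comp_ne_nil hg rfl).elim
          · exact ⟨init, e, by rw [he, List.concat_eq_append]⟩
        have hnd := (comps_nodup hC).1 _ hg
        have heni : e ∉ init := by
          intro hei
          exact ((List.pairwise_append.mp hnd).2.2 e hei e (by simp)) rfl
        have hVinit : ∀ u ∈ init, (length ∘ blk d C) u = 1 := by
          intro u hu
          have hV : typeOf d C u = VType.V := by
            apply typeOf_V hC hg (by simp [hu])
            rw [List.getLast?_concat]
            intro hcon
            exact heni ((Option.some_inj.mp hcon) ▸ hu)
          simp [Function.comp, blk_V hV]
        rw [List.map_append, List.sum_append, sum_map_ones (f := fun a => (blk d C a).length) hVinit]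
        simp only [List.map_cons, List.map_nil, List.sum_cons, List.sum_nil, Function.comp_apply]
        have hspec := typeOf_spec hC hg (show e ∈ init ++ [e] by simp)
        rw [List.getLast?_concat] at hspec
        by_cases ho : Odd (init ++ [e]).length
        · rw [if_pos ⟨rfl, ho⟩] at hspec
          obtain ⟨c, hc⟩ := ho
          rw [List.length_append] at hc
          simp only [List.length_singleton] at hc
          by_cases hs : star d e.1 < e.1
          · rw [if_pos hs] at hspec
            rw [blk_H hspec]
            exact ⟨c + 1, by simp; omega⟩
          · rw [if_neg hs] at hspec
            rw [blk_S hspec]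
            exact ⟨c, by simp; omega⟩
        · rw [if_neg (by tauto)] at hspec
          rw [blk_V hspec]
          have hEg : Even (init ++ [e]).length := Nat.not_odd_iff_even.mp ho
          obtain ⟨c, hc⟩ := hEg
          rw [List.length_append] at hc
          simp only [List.length_singleton] at hc ⊢
          exact ⟨c, by omega⟩
      · -- g entirely after j
        have hfil3 : g.filter (fun β => decide (pgt β j)) = [] :=
          List.filter_eq_nil_iff.mpr (fun a ha => by
            simp only [decide_eq_true_eq]
            intro hcon
            exact pgt_asymm hcon (hcr j hjgj a ha))
        rw [hfil3]; simp
  obtain ⟨a, ha⟩ := hEv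
  simp only [List.length_singleton]
  exact ⟨a, by omega⟩

end Ctx4
end OGAux
namespace OGAux
open OG List
section Ctx5
variable {d : ℕ} {v : Finset ℕ} {C : List (ℕ × ℕ)}

lemma mem_Wl_of_above (hC : IsVChain d v C) {j : ℕ × ℕ} (hj : j ∈ C)
    (hjH : typeOf d C j = VType.H) {x : ℕ × ℕ} (hx : x ∈ SC d C)
    (hab : pgt x (ph d j)) : x ∈ Wl d C j := by
  obtain ⟨β, hβC, hxS⟩ := mem_SC_iff.mp hx
  have hbβ := bnd hC hβC
  have hbj := bnd hC hj
  have hjr := H_row hC hj hjH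
  have hmem_left : pgt β j → ∀ y ∈ blk d C β, y ∈ Wl d C j := by
    intro hβj y hy
    unfold Wl
    apply List.mem_append.mpr
    left
    exact List.mem_flatMap.mpr ⟨β, List.mem_filter.mpr ⟨hβC, by simpa using hβj⟩, hy⟩
  have hpvj : pv d j ∈ Wl d C j := by
    unfold Wl
    apply List.mem_append.mpr
    right; simp
  cases hty : typeOf d C β with
  | V =>
    rw [SCa_V hty] at hxS
    rw [Multiset.mem_singleton] at hxS
    subst hxS
    rcases tri hC hβC hj with rfl | h1 | h1
    · exact hpvj
    · exact hmem_left h1 _ (by rw [blk_V hty]; simp)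
    · exfalso
      have hc : β.2 ≤ star d j.1 := by
        have := hab.2
        unfold pv ph at this
        simp at this
        omega
      exact coreB hC hj hβC h1 hjH hc (by simp [hty])
  | H =>
    rw [SCa_H hty] at hxS
    have hxc : x = pv d β ∨ x = ph d β := by simpa using hxS
    rcases hxc with rfl | rfl
    · rcases tri hC hβC hj with rfl | h1 | h1
      · exact hpvj
      · exact hmem_left h1 _ (by rw [blk_H hty]; simp)
      · exfalso
        have hc : β.2 ≤ star d j.1 := by
          have := hab.2
          unfold pv ph at this
          simp at this
          omega
        exact coreB hC hj hβC h1 hjH hc (by simp [hty])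
    · have h1 : pgt β j := by
        apply before_of_row hC hβC hj
        have := hab.1
        unfold ph at this
        simpa using this
      exact hmem_left h1 _ (by rw [blk_H hty]; simp)
  | S =>
    exfalso
    rw [SCa_S hty] at hxS
    have hsr := S_row hC hβC hty
    have hxc : x = β ∨ x = hash d β := by simpa using hxS
    rcases hxc with rfl | rfl
    · have := hab.1
      unfold ph at this
      simp at this
      omega
    · have := hab.2
      unfold OG.hash ph OG.star at this
      simp at this
      omega

/-! ### depth plumbing -/

lemma chain_nodup {S : Multiset (ℕ × ℕ)} {L : List (ℕ × ℕ)} (h : IsChainIn S L) : L.Nodup :=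
  (isChain_iff_pairwise.mp h.1).imp (fun hab => by rintro rfl; exact pgt_irrefl hab)

lemma depth_bdd {S : Multiset (ℕ × ℕ)} {a : ℕ × ℕ} :
    BddAbove {k | ∃ L, IsChainIn S L ∧ L.getLast? = some a ∧ L.length = k} := by
  refine ⟨Multiset.card S, ?_⟩
  rintro m ⟨L, hL, _, rfl⟩
  have hnd := chain_nodup hL
  calc L.length = L.toFinset.card := (List.toFinset_card_of_nodup hnd).symm
    _ ≤ S.toFinset.card := Finset.card_le_card (fun x hx => by
        rw [List.mem_toFinset] at hx
        rw [Multiset.mem_toFinset]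
        exact hL.2 x hx)
    _ ≤ Multiset.card S := Multiset.toFinset_card_le S

lemma depth_ge {S : Multiset (ℕ × ℕ)} {a : ℕ × ℕ} {L : List (ℕ × ℕ)}
    (hL : IsChainIn S L) (hlast : L.getLast? = some a) : L.length ≤ depth S a :=
  le_csSup depth_bdd ⟨L, hL, hlast, rfl⟩

lemma chain_snoc {S : Multiset (ℕ × ℕ)} {M : List (ℕ × ℕ)} {z a : ℕ × ℕ} (h : IsChainIn S M)
    (hlast : M.getLast? = some z) (hza : pgt z a) (ha : a ∈ S) :
    IsChainIn S (M ++ [a]) := by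
  constructor
  · rw [List.Chain', List.isChain_append]
    refine ⟨h.1, List.isChain_singleton a, ?_⟩
    intro x hx y hy
    rw [hlast] at hx
    simp at hx hy
    subst hx; subst hy
    exact hza
  · intro b hb
    rcases List.mem_append.mp hb with hb | hb
    · exact h.2 b hb
    · simp at hb; subst hb; exact ha

lemma chain_prefix {S : Multiset (ℕ × ℕ)} {M : List (ℕ × ℕ)} {a : ℕ × ℕ}
    (h : IsChainIn S (M ++ [a])) : IsChainIn S M := by
  constructor
  · exact (List.isChain_append.mp h.1).1
  · intro b hb; exact h.2 b (by simp [hb])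

/-! ### hash replacement -/

lemma hash_replace (hC : IsVChain d v C) :
    ∀ n : ℕ, ∀ L : List (ℕ × ℕ), L.length = n → IsChainIn (SC d C) L →
    ∀ β, β ∈ C → typeOf d C β = VType.S → L.getLast? = some (hash d β) →
    ∃ L', IsChainIn (SC d C) L' ∧ L'.getLast? = some β ∧ L'.length = n := by
  intro n
  induction n using Nat.strong_induction_on with
  | _ n ih =>
    intro L hlen hL β hβ hβS hlast
    obtain ⟨L₀, rfl⟩ := List.getLast?_eq_some_iff.mp hlast
    have hβSC : β ∈ SC d C := mem_SC_iff.mpr ⟨β, hβ, by rw [SCa_S hβS]; simp⟩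
    have hbβ := bnd hC hβ
    have hsrβ := S_row hC hβ hβS
    cases hL₀e : L₀.getLast? with
    | none =>
      rw [List.getLast?_eq_none_iff] at hL₀e
      subst hL₀e
      refine ⟨[β], ⟨List.isChain_singleton β, ?_⟩, by simp, by simpa using hlen⟩
      intro b hb; simp at hb; subst hb; exact hβSC
    | some z =>
      have hzL : z ∈ L₀ := List.mem_of_getLast? hL₀e
      have hzSC : z ∈ SC d C := hL.2 z (by simp [hzL])
      have hzy : pgt z (hash d β) := by
        have := (List.isChain_append.mp hL.1).2.2 z (by rw [hL₀e]; rfl) (hash d β) rfl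
        exact this
      obtain ⟨w, hwC, hwS⟩ := mem_SC_iff.mp hzSC
      have hbw := bnd hC hwC
      cases hw : typeOf d C w with
      | V =>
        rw [SCa_V hw] at hwS
        rw [Multiset.mem_singleton] at hwS
        subst hwS
        have hwβ : pgt w β := by
          apply before_of_col hC hwC hβ
          have := hzy.1
          unfold pv OG.hash OG.star at this
          simp at this; omega
        have hzβ : pgt (pv d w) β := by
          unfold pgt at hwβ
          unfold pgt pv OG.star
          constructor <;> simp <;> omega
        exact ⟨L₀ ++ [β], chain_snoc (chain_prefix hL) hL₀e hzβ hβSC,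
          List.getLast?_concat, by simp at hlen ⊢; omega⟩
      | H =>
        rw [SCa_H hw] at hwS
        have hxc : z = pv d w ∨ z = ph d w := by simpa using hwS
        have hwr := H_row hC hwC hw
        rcases hxc with rfl | rfl
        · have hwβ : pgt w β := by
            apply before_of_col hC hwC hβ
            have := hzy.1
            unfold pv OG.hash OG.star at this
            simp at this; omega
          have hzβ : pgt (pv d w) β := by
            unfold pgt at hwβ
            unfold pgt pv OG.star
            constructor <;> simp <;> omega
          exact ⟨L₀ ++ [β], chain_snoc (chain_prefix hL) hL₀e hzβ hβSC,
            List.getLast?_concat, by simp at hlen ⊢; omega⟩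
        · have hzβ : pgt (ph d w) β := by
            have h1 := hzy.1
            unfold OG.hash ph OG.star at h1
            simp at h1
            unfold pgt ph OG.star
            constructor <;> simp <;> omega
          exact ⟨L₀ ++ [β], chain_snoc (chain_prefix hL) hL₀e hzβ hβSC,
            List.getLast?_concat, by simp at hlen ⊢; omega⟩
      | S =>
        rw [SCa_S hw] at hwS
        have hsrw := S_row hC hwC hw
        have hxc : z = w ∨ z = hash d w := by simpa using hwS
        rcases hxc with rfl | rfl
        · exfalso
          have := hzy.1
          unfold OG.hash at this
          simp at this
          unfold OG.star at this
          omega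
        · have hwβ : pgt w β := by
            apply before_of_col hC hwC hβ
            have := hzy.1
            unfold OG.hash OG.star at this
            simp at this; omega
          have hlen₀ : L₀.length < n := by simp at hlen; omega
          obtain ⟨L₀', hL₀', hlast', hlen'⟩ := ih L₀.length hlen₀ L₀ rfl
            (chain_prefix hL) w hwC hw hL₀e
          refine ⟨L₀' ++ [β], chain_snoc hL₀' hlast' hwβ hβSC,
            List.getLast?_concat, ?_⟩
          simp at hlen ⊢
          omega

end Ctx5
end OGAux
namespace OGAux
open OG List
section Ctx6
variable {d : ℕ} {v : Finset ℕ} {C : List (ℕ × ℕ)}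

lemma qCa_V {β : ℕ × ℕ} (h : typeOf d C β = VType.V) : qCa d C β = pv d β := by
  unfold qCa; rw [h]

lemma qCa_H {β : ℕ × ℕ} (h : typeOf d C β = VType.H) : qCa d C β = pv d β := by
  unfold qCa; rw [h]

lemma qCa_S {β : ℕ × ℕ} (h : typeOf d C β = VType.S) : qCa d C β = β := by
  unfold qCa; rw [h]

lemma main_bound (hC : IsVChain d v C) (k : ℕ) (hk : ∀ α ∈ C, odepthC d C α ≤ k) :
    ∀ L, IsChainIn (SC d C) L → L.length ≤ (if Even k then k else k + 1) := by
  have hkE : k ≤ (if Even k then k else k + 1) := by split <;> omega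
  intro L hL
  cases hLe : L.getLast? with
  | none =>
    rw [List.getLast?_eq_none_iff] at hLe
    subst hLe; simp
  | some y =>
    have hyL : y ∈ L := List.mem_of_getLast? hLe
    have hySC : y ∈ SC d C := hL.2 y hyL
    obtain ⟨β, hβC, hySCa⟩ := mem_SC_iff.mp hySC
    have hq : odepthC d C β ≤ k := hk β hβC
    cases hty : typeOf d C β with
    | V =>
      rw [SCa_V hty] at hySCa
      rw [Multiset.mem_singleton] at hySCa
      subst hySCa
      have h1 : L.length ≤ depth (SC d C) (pv d β) := depth_ge hL hLe
      have h2 : depth (SC d C) (pv d β) = odepthC d C β := by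
        unfold odepthC; rw [qCa_V hty]
      omega
    | S =>
      rw [SCa_S hty] at hySCa
      have hyc : y = β ∨ y = hash d β := by simpa using hySCa
      rcases hyc with rfl | rfl
      · have h1 : L.length ≤ depth (SC d C) y := depth_ge hL hLe
        have h2 : depth (SC d C) y = odepthC d C y := by
          unfold odepthC; rw [qCa_S hty]
        omega
      · obtain ⟨L', hL', hlast', hlen'⟩ := hash_replace hC L.length L rfl hL β hβC hty hLe
        have h1 : L'.length ≤ depth (SC d C) β := depth_ge hL' hlast'
        have h2 : depth (SC d C) β = odepthC d C β := by
          unfold odepthC; rw [qCa_S hty]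
        omega
    | H =>
      rw [SCa_H hty] at hySCa
      have hyc : y = pv d β ∨ y = ph d β := by simpa using hySCa
      rcases hyc with rfl | rfl
      · have h1 : L.length ≤ depth (SC d C) (pv d β) := depth_ge hL hLe
        have h2 : depth (SC d C) (pv d β) = odepthC d C β := by
          unfold odepthC; rw [qCa_H hty]
        omega
      · -- the ph case: use the diagonal chain Wl
        obtain ⟨L₀, rfl⟩ := List.getLast?_eq_some_iff.mp hLe
        have hp : (L₀ ++ [ph d β]).Pairwise pgt := isChain_iff_pairwise.mp hL.1
        have hndL : L₀.Nodup :=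
          ((List.pairwise_append.mp hp).1).imp (fun hab => by rintro rfl; exact pgt_irrefl hab)
        have habove : ∀ x ∈ L₀, pgt x (ph d β) := fun x hx =>
          (List.pairwise_append.mp hp).2.2 x hx _ (by simp)
        have h1 : L₀.length ≤ (Wl d C β).length := by
          have hsub : L₀.toFinset ⊆ (Wl d C β).toFinset := by
            intro x hx
            rw [List.mem_toFinset] at hx ⊢
            exact mem_Wl_of_above hC hβC hty (hL.2 x (by simp [hx])) (habove x hx)
          calc L₀.length = L₀.toFinset.card := (List.toFinset_card_of_nodup hndL).symm
            _ ≤ (Wl d C β).toFinset.card := Finset.card_le_card hsub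
            _ ≤ (Wl d C β).length := (Wl d C β).toFinset_card_le
        have h2 : (Wl d C β).length ≤ k := by
          have h3 : (Wl d C β).length ≤ depth (SC d C) (pv d β) :=
            depth_ge ⟨Wl_chain hC hβC hty, Wl_mem_SC hC hβC hty⟩ Wl_getLast
          have h4 : depth (SC d C) (pv d β) = odepthC d C β := by
            unfold odepthC; rw [qCa_H hty]
          omega
        have h3 : Odd (Wl d C β).length := Wl_odd hC hβC hty
        obtain ⟨a, ha⟩ := h3
        have hlen : (L₀ ++ [ph d β]).length = L₀.length + 1 := by simp
        rw [hlen]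
        by_cases hek : Even k
        · obtain ⟨b, hb⟩ := id hek
          simp only [if_pos hek]
          omega
        · simp only [if_neg hek]
          omega

end Ctx6
end OGAux


open OG in
/-- if the o-depths of elements of a `v`-chain `C` are bounded by `k`,
then the depths of elements of `𝔖_C` are bounded by the smallest even integer `≥ k`. -/
theorem stmt12 (d : ℕ) (hd : 0 < d) (v : Finset ℕ) (hv : v ∈ Iset d)
    (C : List (ℕ × ℕ)) (hC : IsVChain d v C) (k : ℕ)
    (hk : ∀ α ∈ C, odepthC d C α ≤ k) :
    ∀ β ∈ SC d C, depth (SC d C) β ≤ (if Even k then k else k + 1) := by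
  intro β hβ
  unfold depth
  apply csSup_le'
  rintro x ⟨L, hL, hlast, rfl⟩
  exact OGAux.main_bound hC k hk L hL
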